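/- For every integer n > 1, the sum over all weakly decreasing tuples (λ₁, λ₂, ..., λₙ) of nonnegative integers with λ₁ + λ₂ + ... + λₙ = n and λ₁ even of the product C(λ₁,λ₂)·C(λ₂,λ₃)···C(λₙ,0) equals 2^(n-2). -/

import Mathlib

open Finset

/-- Weakly decreasing tuples `(λ₁,…,λₙ)` of nonnegative integers with `λ₁+⋯+λₙ = n`. -/
def partitionTuples (n : ℕ) : Finset (Fin n → ℕ) :=
  (Finset.Nat.antidiagonalTuple n n).filter fun t => ∀ i j : Fin n, i ≤ j → t j ≤ t i

/-- The product `C(λ₁,λ₂)·C(λ₂,λ₃)⋯C(λₙ,0)` with the convention `λ_{n+1} = 0`. -/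
def binomProd (n : ℕ) (t : Fin n → ℕ) : ℕ :=
  ∏ i : Fin n, Nat.choose (t i) (if h : (i : ℕ) + 1 < n then t ⟨(i : ℕ) + 1, h⟩ else 0)

/-- Head of a tuple, or `0` for the empty tuple. -/
def head0 (m : ℕ) (t : Fin m → ℕ) : ℕ := if h : 0 < m then t ⟨0, h⟩ else 0

/-- Weight with an extra leading binomial factor. -/
def Bw (m : ℕ) (k : ℕ) (t : Fin m → ℕ) : ℕ := Nat.choose k (head0 m t) * binomProd m t

/-- Recursive description of the generating count. -/
def Grec : ℕ → ℕ → ℕ → ℕ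
  | 0, s, _ => if s = 0 then 1 else 0
  | m + 1, s, k => ∑ j ∈ range (s + 1), Nat.choose k j * Grec m (s - j) j

lemma cons_mk (m j : ℕ) (t : Fin m → ℕ) (a : ℕ) (h : a + 1 < m + 1) :
    (Fin.cons j t : Fin (m + 1) → ℕ) ⟨a + 1, h⟩ = t ⟨a, by omega⟩ := by
  have : (⟨a + 1, h⟩ : Fin (m + 1)) = Fin.succ ⟨a, by omega⟩ := rfl
  rw [this, Fin.cons_succ]

lemma binomProd_cons (m j : ℕ) (t : Fin m → ℕ) :
    binomProd (m + 1) (Fin.cons j t) = Nat.choose j (head0 m t) * binomProd m t := by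
  rw [binomProd, Fin.prod_univ_succ]
  congr 1
  · rw [Fin.cons_zero]
    congr 1
    simp only [Fin.val_zero, head0]
    by_cases h1 : 0 < m
    · rw [dif_pos h1]; exact (dif_pos (by omega)).trans (cons_mk m j t 0 (by omega))
    · rw [dif_neg h1]; exact dif_neg (by omega)
  · rw [binomProd]
    refine Finset.prod_congr rfl fun i _ => ?_
    rw [Fin.cons_succ]
    congr 1
    simp only [Fin.val_succ]
    split_ifs with h2 h3 h3
    · exact cons_mk m j t ((i : ℕ) + 1) h2
    · omega
    · omega
    · rfl

lemma sum_antidiagonalTuple_succ {M : Type*} [AddCommMonoid M] (m s : ℕ)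
    (f : (Fin (m + 1) → ℕ) → M) :
    ∑ t ∈ Finset.Nat.antidiagonalTuple (m + 1) s, f t =
      ∑ p ∈ Finset.HasAntidiagonal.antidiagonal s, ∑ u ∈ Finset.Nat.antidiagonalTuple m p.2,
        f (Fin.cons p.1 u) := by
  rw [← Finset.sum_sigma ((Finset.HasAntidiagonal.antidiagonal s))
      (fun p => Finset.Nat.antidiagonalTuple m p.2) (fun q => f (Fin.cons q.1.1 q.2))]
  refine Finset.sum_bij' (fun t _ => (⟨(t 0, ∑ i, Fin.tail t i), Fin.tail t⟩ :
      (_ : ℕ × ℕ) × (Fin m → ℕ))) (fun q _ => Fin.cons q.1.1 q.2) ?_ ?_ ?_ ?_ ?_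
  · intro t ht
    rw [Finset.Nat.mem_antidiagonalTuple] at ht
    simp only [Finset.mem_sigma, Finset.HasAntidiagonal.mem_antidiagonal, Finset.Nat.mem_antidiagonalTuple]
    refine ⟨?_, trivial⟩
    rw [← ht, Fin.sum_univ_succ]
    rfl
  · intro q hq
    simp only [Finset.mem_sigma, Finset.HasAntidiagonal.mem_antidiagonal,
      Finset.Nat.mem_antidiagonalTuple] at hq
    simp only [Finset.Nat.mem_antidiagonalTuple, Fin.sum_cons, hq.2, hq.1]
  · intro t _
    exact Fin.cons_self_tail t
  · intro q hq
    simp only [Finset.mem_sigma, Finset.Nat.mem_antidiagonalTuple] at hq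
    simp only [Fin.cons_zero, Fin.tail_cons, hq.2]
  · intro t _
    rw [Fin.cons_self_tail]

lemma Bw_cons (m k j : ℕ) (t : Fin m → ℕ) :
    Bw (m + 1) k (Fin.cons j t) = Nat.choose k j * Bw m j t := by
  rw [Bw, Bw, binomProd_cons]
  have h : head0 (m + 1) (Fin.cons j t) = j := by
    rw [head0, dif_pos (Nat.succ_pos m)]
    rfl
  rw [h]

lemma sum_Bw (m : ℕ) : ∀ s k : ℕ,
    ∑ t ∈ Finset.Nat.antidiagonalTuple m s, Bw m k t = Grec m s k := by
  induction m with
  | zero =>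
    intro s k
    rcases s with _ | s
    · rw [Finset.Nat.antidiagonalTuple_zero_zero]
      simp [Grec, Bw, head0, binomProd]
    · rw [Finset.Nat.antidiagonalTuple_zero_succ]
      simp [Grec]
  | succ m ih =>
    intro s k
    rw [sum_antidiagonalTuple_succ]
    show _ = Grec (m + 1) s k
    rw [Grec, Finset.Nat.sum_antidiagonal_eq_sum_range_succ_mk
      (fun p => ∑ u ∈ Finset.Nat.antidiagonalTuple m p.2, Bw (m+1) k (Fin.cons p.1 u)) s]
    refine Finset.sum_congr rfl fun j _ => ?_
    rw [← ih (s - j) j, Finset.mul_sum]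
    exact Finset.sum_congr rfl fun u _ => Bw_cons m k j u

lemma Grec_zero_k (m : ℕ) : ∀ s : ℕ, 0 < s → Grec m s 0 = 0 := by
  induction m with
  | zero => intro s hs; simp [Grec, Nat.pos_iff_ne_zero.mp hs]
  | succ m ih =>
    intro s hs
    rw [Grec]
    refine Finset.sum_eq_zero fun j hj => ?_
    rcases Nat.eq_zero_or_pos j with rfl | hj'
    · simp [ih s hs]
    · rw [Nat.choose_eq_zero_of_lt hj', zero_mul]

lemma Grec_eq (m : ℕ) : ∀ s k : ℕ, s ≤ m → Grec m s k = Nat.choose (s + k - 1) s := by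
  induction m with
  | zero =>
    intro s k hs
    interval_cases s
    simp [Grec]
  | succ m ih =>
    intro s k hs
    rcases Nat.eq_zero_or_pos s with rfl | hs'
    · simp [Grec, ih 0 0 (Nat.zero_le m)]
    · rw [Grec]
      have hkey : (s + k - 1).choose s = ∑ j ∈ range (s + 1),
          Nat.choose k j * Nat.choose (s - 1) (s - j) := by
        have h1 : s + k - 1 = k + (s - 1) := by omega
        rw [h1, Nat.add_choose_eq,
          Finset.Nat.sum_antidiagonal_eq_sum_range_succ_mk
            (fun p => Nat.choose k p.1 * Nat.choose (s-1) p.2) s]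
      rw [hkey]
      refine Finset.sum_congr rfl fun j hj => ?_
      rw [Finset.mem_range] at hj
      congr 1
      rcases Nat.eq_zero_or_pos j with rfl | hj'
      · rw [Nat.sub_zero, Grec_zero_k m s hs', Nat.choose_eq_zero_of_lt (by omega)]
      · rw [ih (s - j) j (by omega)]
        congr 1
        omega

lemma binomProd_eq_zero_of_not_mono {n : ℕ} (t : Fin n → ℕ)
    (h : ¬ ∀ i j : Fin n, i ≤ j → t j ≤ t i) : binomProd n t = 0 := by
  have hadj : ∃ i : Fin n, ∃ h : (i : ℕ) + 1 < n, t i < t ⟨(i : ℕ) + 1, h⟩ := by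
    by_contra hc
    push_neg at hc
    apply h
    intro i j hij
    have key : ∀ d : ℕ, ∀ i : Fin n, ∀ hd : (i : ℕ) + d < n, t ⟨(i : ℕ) + d, hd⟩ ≤ t i := by
      intro d
      induction d with
      | zero => intro i hd; exact le_of_eq (by congr 1)
      | succ d ihd =>
        intro i hd
        have h1 : (i : ℕ) + d < n := by omega
        have h2 : ((⟨(i : ℕ) + d, h1⟩ : Fin n) : ℕ) + 1 < n := by
          show (i : ℕ) + d + 1 < n
          omega
        exact le_trans (hc ⟨(i : ℕ) + d, h1⟩ h2) (ihd i h1)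
    have hd : (j : ℕ) = (i : ℕ) + ((j : ℕ) - (i : ℕ)) := by
      have := (Fin.le_def).mp hij; omega
    have hlt : (i : ℕ) + ((j : ℕ) - (i : ℕ)) < n := by rw [← hd]; exact j.isLt
    have h4 := key ((j : ℕ) - (i : ℕ)) i hlt
    have hij' : (i : ℕ) ≤ (j : ℕ) := hij
    have heq : (⟨(i : ℕ) + ((j : ℕ) - (i : ℕ)), hlt⟩ : Fin n) = j := Fin.ext (by
      show (i : ℕ) + ((j : ℕ) - (i : ℕ)) = (j : ℕ)
      omega)
    rw [heq] at h4
    exact h4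
  obtain ⟨i, h1, h2⟩ := hadj
  rw [binomProd]
  refine Finset.prod_eq_zero (Finset.mem_univ i) ?_
  rw [dif_pos h1]
  exact Nat.choose_eq_zero_of_lt h2

lemma odd_sum_choose (n : ℕ) (hn : 2 ≤ n) :
    ∑ i ∈ (range n).filter (fun i => Odd i), Nat.choose (n - 1) i = 2 ^ (n - 2) := by
  obtain ⟨a, rfl⟩ : ∃ a, n = a + 2 := ⟨n - 2, by omega⟩
  simp only [show a + 2 - 1 = a + 1 from rfl, show a + 2 - 2 = a from rfl]
  set O := ∑ i ∈ (range (a + 2)).filter (fun i => Odd i), Nat.choose (a + 1) i with hO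
  set E := ∑ i ∈ (range (a + 2)).filter (fun i => ¬ Odd i), Nat.choose (a + 1) i with hE
  have hsum : E + O = 2 ^ (a + 1) := by
    rw [hE, hO, Finset.sum_filter_not_add_sum_filter]
    exact Nat.sum_range_choose (a + 1)
  have halt : (E : ℤ) - O = 0 := by
    have h0 : ∑ i ∈ range ((a + 1) + 1), (-1 : ℤ) ^ i * ((a + 1).choose i) = 0 := by
      rw [Int.alternating_sum_range_choose, if_neg (by omega)]
    rw [← h0, ← Finset.sum_filter_not_add_sum_filter (range (a + 2)) (fun i => Odd i)
      (fun i => (-1 : ℤ) ^ i * ((a + 1).choose i))]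
    have he : ∑ i ∈ (range (a + 2)).filter (fun i => ¬ Odd i),
        (-1 : ℤ) ^ i * ((a + 1).choose i) = (E : ℤ) := by
      rw [hE, Nat.cast_sum]
      refine Finset.sum_congr rfl fun i hi => ?_
      rw [Finset.mem_filter] at hi
      rw [(Nat.not_odd_iff_even.mp hi.2).neg_one_pow, one_mul]
    have ho : ∑ i ∈ (range (a + 2)).filter (fun i => Odd i),
        (-1 : ℤ) ^ i * ((a + 1).choose i) = -(O : ℤ) := by
      rw [hO, Nat.cast_sum, ← Finset.sum_neg_distrib]
      refine Finset.sum_congr rfl fun i hi => ?_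
      rw [Finset.mem_filter] at hi
      rw [(hi.2).neg_one_pow]
      ring
    rw [he, ho]
    ring
  have hEO : E = O := by omega
  have h2 : (2 : ℕ) ^ (a + 1) = 2 * 2 ^ a := by rw [pow_succ]; ring
  omega

theorem stmt4 (n : ℕ) (hn : 1 < n) :
    ∑ t ∈ (partitionTuples n).filter (fun t => Even (t ⟨0, Nat.zero_lt_of_lt hn⟩)),
      binomProd n t = 2 ^ (n - 2) := by
  obtain ⟨m, rfl⟩ : ∃ m, n = m + 1 := ⟨n - 1, by omega⟩
  have hm : 1 ≤ m := by omega
  have step1 : ∑ t ∈ (partitionTuples (m+1)).filter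
        (fun t => Even (t ⟨0, Nat.zero_lt_of_lt hn⟩)), binomProd (m+1) t
      = ∑ t ∈ (Finset.Nat.antidiagonalTuple (m+1) (m+1)).filter
        (fun t => Even (t ⟨0, Nat.zero_lt_of_lt hn⟩)), binomProd (m+1) t := by
    rw [partitionTuples, Finset.filter_filter]
    apply Finset.sum_subset
    · intro t ht
      rw [Finset.mem_filter] at ht ⊢
      exact ⟨ht.1, ht.2.2⟩
    · intro t ht hnt
      rw [Finset.mem_filter] at ht
      by_cases hmono : ∀ i j : Fin (m+1), i ≤ j → t j ≤ t i
      · exact absurd (Finset.mem_filter.mpr ⟨ht.1, hmono, ht.2⟩) hnt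
      · exact binomProd_eq_zero_of_not_mono t hmono
  rw [step1, Finset.sum_filter, sum_antidiagonalTuple_succ m (m+1)
    (fun t => if Even (t ⟨0, Nat.zero_lt_of_lt hn⟩) then binomProd (m+1) t else 0)]
  clear step1
  have step2 : ∀ p ∈ Finset.HasAntidiagonal.antidiagonal (m+1),
      (∑ u ∈ Finset.Nat.antidiagonalTuple m p.2,
        if Even ((Fin.cons p.1 u : Fin (m+1) → ℕ) ⟨0, Nat.zero_lt_of_lt hn⟩)
          then binomProd (m+1) (Fin.cons p.1 u) else 0)
      = if Even p.1 then Grec m p.2 p.1 else 0 := by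
    intro p hp
    have hz : ∀ u : Fin m → ℕ,
        (Fin.cons p.1 u : Fin (m+1) → ℕ) ⟨0, Nat.zero_lt_of_lt hn⟩ = p.1 := fun u => rfl
    by_cases he : Even p.1
    · rw [if_pos he, ← sum_Bw m p.2 p.1]
      refine Finset.sum_congr rfl fun u _ => ?_
      rw [hz u, if_pos he, binomProd_cons, Bw]
    · rw [if_neg he]
      refine Finset.sum_eq_zero fun u _ => ?_
      rw [hz u, if_neg he]
  rw [Finset.sum_congr rfl step2, Finset.Nat.sum_antidiagonal_eq_sum_range_succ_mk
    (fun p => if Even p.1 then Grec m p.2 p.1 else 0) (m+1)]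
  clear step2
  have step3 : ∀ j ∈ range (m + 2),
      (if Even (j : ℕ) then Grec m (m + 1 - j) j else 0)
      = if Odd (j - 1) ∧ 1 ≤ j then Nat.choose m (j - 1) else 0 := by
    intro j hj
    rw [Finset.mem_range] at hj
    rcases Nat.eq_zero_or_pos j with rfl | hj'
    · rw [if_pos (Even.zero), Nat.sub_zero, Grec_zero_k m (m+1) (by omega), if_neg (by simp)]
    · by_cases he : Even j
      · rw [if_pos he, if_pos ⟨Nat.Even.sub_odd hj' he odd_one, hj'⟩,
          Grec_eq m (m + 1 - j) j (by omega)]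
        have h1 : m + 1 - j + j - 1 = m := by omega
        rw [h1]
        rw [Nat.choose_symm_of_eq_add (show m = (m + 1 - j) + (j - 1) by omega)]
      · rw [if_neg he, if_neg ?_]
        rintro ⟨ho, h1⟩
        exact he (by rcases ho with ⟨c, hc⟩; exact ⟨c + 1, by omega⟩)
  rw [Finset.sum_congr rfl step3]
  clear step3
  have step4 : ∑ j ∈ range (m + 2), (if Odd (j - 1) ∧ 1 ≤ j then Nat.choose m (j-1) else 0)
      = ∑ i ∈ range (m + 1), (if Odd i then Nat.choose m i else 0) := by
    rw [Finset.sum_range_succ' (fun j => if Odd (j - 1) ∧ 1 ≤ j then Nat.choose m (j-1) else 0)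
      (m + 1)]
    simp only [Nat.add_sub_cancel, le_add_iff_nonneg_left, Nat.zero_le, and_true,
      Nat.zero_sub, Nat.le_zero]
    norm_num
  rw [step4]
  clear step4
  have hfin := odd_sum_choose (m + 1) (by omega)
  rw [Finset.sum_filter] at hfin
  simpa using hfin
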